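/- arXiv:1604.05135 — 4 statements merged into one kernel-verified Lean document; each statement's English description precedes it below -/
import Mathlib

section
/- Let A, B, C be finite loopless simple graphs, f : A → B and g : A → C graph homomorphisms, G the pushout of f and g (the quotient of the disjoint union B ⊔ C identifying f(a) with g(a) for all vertices a of A), and D_n the double mapping cylinder of height n ≥ 1 of f and g. If G is a simple graph, then the chromatic number of G is at least the chromatic number of D_n: χ(G) ≥ χ(D_n). -/
/-- A graph (possibly with loops) on vertex type `V`. -/
structure LGraph (V : Type) where
  Adj : V → V → Prop
  symm : ∀ {x y}, Adj x y → Adj y x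

/-- A graph homomorphism. -/
structure GHom {V W : Type} (G : LGraph V) (H : LGraph W) where
  toFun : V → W
  map_adj : ∀ {x y}, G.Adj x y → H.Adj (toFun x) (toFun y)

/-- The complete graph `K_k` as a `Graph`. -/
def completeG (k : ℕ) : LGraph (Fin k) :=
  ⟨fun i j => i ≠ j, fun h => Ne.symm h⟩

/-- `Colorable G k` iff there is a homomorphism `G → K_k`. -/
def LGraph.Colorable {V : Type} (G : LGraph V) (k : ℕ) : Prop :=
  Nonempty (GHom G (completeG k))

/-- The chromatic number: least `k` admitting a proper colouring. -/
noncomputable def chromNum {V : Type} (G : LGraph V) : ℕ :=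
  sInf {k | G.Colorable k}

/-- The categorical product `A × I_n`, where `I_n` is the looped path on `{0, …, n}`. -/
def LGraph.prodIn {V : Type} (A : LGraph V) (n : ℕ) : LGraph (V × Fin (n + 1)) :=
  ⟨fun p q => A.Adj p.1 q.1 ∧ |(p.2 : ℤ) - (q.2 : ℤ)| ≤ 1, by
    rintro ⟨a, i⟩ ⟨b, j⟩ ⟨h1, h2⟩
    exact ⟨A.symm h1, by rwa [abs_sub_comm]⟩⟩

section Cyl
variable {VA VB VC : Type}

/-- Generating relation for the double mapping cylinder: `f a ∼ (a, n)` and `g a ∼ (a, 0)`. -/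
def cylRel (f : VA → VB) (g : VA → VC) (n : ℕ) :
    (VB ⊕ (VA × Fin (n + 1)) ⊕ VC) → (VB ⊕ (VA × Fin (n + 1)) ⊕ VC) → Prop :=
  fun x y =>
    (∃ a, x = Sum.inl (f a) ∧ y = Sum.inr (Sum.inl (a, Fin.last n))) ∨
    (∃ a, x = Sum.inr (Sum.inr (g a)) ∧ y = Sum.inr (Sum.inl (a, 0)))

/-- Vertices of the double mapping cylinder `D_n`. -/
def CylVert (f : VA → VB) (g : VA → VC) (n : ℕ) : Type :=
  Quot (cylRel f g n)

/-- Adjacency on the disjoint union `B ⊔ (A × I_n) ⊔ C`. -/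
def cylBaseAdj (A : LGraph VA) (B : LGraph VB) (C : LGraph VC) (n : ℕ) :
    (VB ⊕ (VA × Fin (n + 1)) ⊕ VC) → (VB ⊕ (VA × Fin (n + 1)) ⊕ VC) → Prop
  | Sum.inl b, Sum.inl b' => B.Adj b b'
  | Sum.inr (Sum.inl p), Sum.inr (Sum.inl q) => (A.prodIn n).Adj p q
  | Sum.inr (Sum.inr c), Sum.inr (Sum.inr c') => C.Adj c c'
  | _, _ => False

/-- The double mapping cylinder `D_n = B ⊔_f (A × I_n) ⊔_g C` of `f : A → B`, `g : A → C`. -/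
def cylGraph (A : LGraph VA) (B : LGraph VB) (C : LGraph VC)
    (f : VA → VB) (g : VA → VC) (n : ℕ) : LGraph (CylVert f g n) :=
  ⟨fun x y => ∃ x₀ y₀, Quot.mk _ x₀ = x ∧ Quot.mk _ y₀ = y ∧ cylBaseAdj A B C n x₀ y₀, by
    rintro x y ⟨x₀, y₀, hx, hy, h⟩
    refine ⟨y₀, x₀, hy, hx, ?_⟩
    rcases x₀ with b | p | c <;> rcases y₀ with b' | p' | c' <;>
      simp only [cylBaseAdj] at h ⊢
    · exact B.symm h
    · exact (A.prodIn n).symm h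
    · exact C.symm h⟩

/-- Generating relation for the pushout: `f a ∼ g a`. -/
def pushRel (f : VA → VB) (g : VA → VC) : (VB ⊕ VC) → (VB ⊕ VC) → Prop :=
  fun x y => ∃ a, x = Sum.inl (f a) ∧ y = Sum.inr (g a)

/-- Vertices of the pushout graph. -/
def PushVert (f : VA → VB) (g : VA → VC) : Type := Quot (pushRel f g)

def pushBaseAdj (B : LGraph VB) (C : LGraph VC) : (VB ⊕ VC) → (VB ⊕ VC) → Prop
  | Sum.inl b, Sum.inl b' => B.Adj b b'
  | Sum.inr c, Sum.inr c' => C.Adj c c'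
  | _, _ => False

/-- The pushout graph `G = B ⊔_A C` of `f : A → B`, `g : A → C`. -/
def pushGraph (B : LGraph VB) (C : LGraph VC) (f : VA → VB) (g : VA → VC) :
    LGraph (PushVert f g) :=
  ⟨fun x y => ∃ x₀ y₀, Quot.mk _ x₀ = x ∧ Quot.mk _ y₀ = y ∧ pushBaseAdj B C x₀ y₀, by
    rintro x y ⟨x₀, y₀, hx, hy, h⟩
    refine ⟨y₀, x₀, hy, hx, ?_⟩
    rcases x₀ with b | c <;> rcases y₀ with b' | c' <;> simp only [pushBaseAdj] at h ⊢
    · exact B.symm h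
    · exact C.symm h⟩

end Cyl

section Aux
variable {VA VB VC : Type}

open Classical in
/-- The base map `B ⊔ (A × I_n) ⊔ C → PushVert f g`. -/
noncomputable def cylToPushBase (f : VA → VB) (g : VA → VC) (n : ℕ) :
    (VB ⊕ (VA × Fin (n + 1)) ⊕ VC) → PushVert f g
  | Sum.inl b => Quot.mk _ (Sum.inl b)
  | Sum.inr (Sum.inr c) => Quot.mk _ (Sum.inr c)
  | Sum.inr (Sum.inl (a, i)) =>
      if i = 0 then Quot.mk _ (Sum.inr (g a)) else Quot.mk _ (Sum.inl (f a))

lemma push_key (f : VA → VB) (g : VA → VC) (a : VA) :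
    (Quot.mk (pushRel f g) (Sum.inl (f a)) : PushVert f g) = Quot.mk _ (Sum.inr (g a)) :=
  Quot.sound ⟨a, rfl, rfl⟩

/-- GHom composition. -/
def GHom.comp {V W X : Type} {G : LGraph V} {H : LGraph W} {K : LGraph X}
    (φ : GHom H K) (ψ : GHom G H) : GHom G K :=
  ⟨φ.toFun ∘ ψ.toFun, fun h => φ.map_adj (ψ.map_adj h)⟩

end Aux

/-- If the pushout `G` of `f : A → B`, `g : A → C` is a simple (loopless)
graph, then its chromatic number is at least that of the double mapping cylinder `D_n`
(of height `n ≥ 1`). -/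
theorem chromNum_cyl_le_chromNum_pushout {VA VB VC : Type}
    [Fintype VA] [Fintype VB] [Fintype VC]
    (A : LGraph VA) (B : LGraph VB) (C : LGraph VC)
    (hA : ∀ v, ¬ A.Adj v v) (hB : ∀ v, ¬ B.Adj v v) (hC : ∀ v, ¬ C.Adj v v)
    (f : GHom A B) (g : GHom A C) (n : ℕ) (hn : 1 ≤ n)
    (hsimple : ∀ v, ¬ (pushGraph B C f.toFun g.toFun).Adj v v) :
    chromNum (cylGraph A B C f.toFun g.toFun n) ≤ chromNum (pushGraph B C f.toFun g.toFun) := by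
  classical
  set fv := f.toFun
  set gv := g.toFun
  -- the collapsing homomorphism D_n → G
  have hresp : ∀ x y, cylRel fv gv n x y →
      cylToPushBase fv gv n x = cylToPushBase fv gv n y := by
    rintro x y (⟨a, rfl, rfl⟩ | ⟨a, rfl, rfl⟩)
    · have hne : (Fin.last n : Fin (n + 1)) ≠ 0 := by
        intro h
        have := congrArg Fin.val h
        simp [Fin.last] at this
        omega
      simp [cylToPushBase, hne]
      rfl
    · simp [cylToPushBase]
      rfl
  let Φ : GHom (cylGraph A B C fv gv n) (pushGraph B C fv gv) := by
    refine ⟨Quot.lift (cylToPushBase fv gv n) hresp, ?_⟩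
    rintro x y ⟨x₀, y₀, rfl, rfl, h⟩
    show (pushGraph B C fv gv).Adj (cylToPushBase fv gv n x₀) (cylToPushBase fv gv n y₀)
    rcases x₀ with b | ⟨a, i⟩ | c <;> rcases y₀ with b' | ⟨a', j⟩ | c' <;>
      simp only [cylBaseAdj] at h
    · exact ⟨Sum.inl b, Sum.inl b', rfl, rfl, h⟩
    · obtain ⟨hadj, hij⟩ := h
      have hfa := f.map_adj hadj
      have hga := g.map_adj hadj
      by_cases hi : i = 0 <;> by_cases hj : j = 0 <;>
        simp only [cylToPushBase, hi, hj, if_pos, if_neg, if_true, if_false, ite_true,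
          ite_false]
      · exact ⟨Sum.inr (gv a), Sum.inr (gv a'), rfl, rfl, hga⟩
      · exact ⟨Sum.inl (fv a), Sum.inl (fv a'), (push_key fv gv a).symm ▸ rfl, rfl, hfa⟩
      · exact ⟨Sum.inl (fv a), Sum.inl (fv a'), rfl, (push_key fv gv a').symm ▸ rfl, hfa⟩
      · exact ⟨Sum.inl (fv a), Sum.inl (fv a'), rfl, rfl, hfa⟩
    · exact ⟨Sum.inr c, Sum.inr c', rfl, rfl, h⟩
  -- G is colorable (finite & loopless)
  haveI : Fintype (PushVert fv gv) := Fintype.ofSurjective (Quot.mk _) Quot.exists_rep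
  set N := Fintype.card (PushVert fv gv)
  have hGcol : (pushGraph B C fv gv).Colorable N := by
    refine ⟨⟨Fintype.equivFin _, ?_⟩⟩
    intro x y h
    have hxy : x ≠ y := by
      rintro rfl; exact hsimple x h
    exact fun he => hxy ((Fintype.equivFin _).injective he)
  have hne : {k | (pushGraph B C fv gv).Colorable k}.Nonempty := ⟨N, hGcol⟩
  have hmem := Nat.sInf_mem hne
  refine Nat.sInf_le ?_
  obtain ⟨ψ⟩ := hmem
  exact ⟨ψ.comp Φ⟩
end

section
/- A loopless connected finite simple graph G is bipartite if and only if its neighbourhood complex N(G) is disconnected (as a topological space / simplicial complex). -/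
variable {V : Type*}

/-- Two vertices share a simplex of the neighbourhood complex `N(G)` iff they have a
common neighbour in `G`. -/
def shareSimplex (G : SimpleGraph V) (u v : V) : Prop :=
  ∃ w, G.Adj w u ∧ G.Adj w v

/-- A vertex belongs to the neighbourhood complex iff it has a neighbour. -/
def isNVertex (G : SimpleGraph V) (u : V) : Prop := ∃ x, G.Adj u x

/-- The neighbourhood complex `N(G)` is connected: its vertex set is nonempty and any two of
its vertices are joined by a chain of vertices in which consecutive ones share a simplex. -/
def NbhdConnected (G : SimpleGraph V) : Prop :=
  (∃ u, isNVertex G u) ∧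
    ∀ u v, isNVertex G u → isNVertex G v → Relation.ReflTransGen (shareSimplex G) u v

theorem R_of_evenWalk {G : SimpleGraph V} :
    ∀ {u v : V} (p : G.Walk u v), Even p.length →
      Relation.ReflTransGen (shareSimplex G) u v
  | _, _, .nil, _ => .refl
  | _, _, .cons h (.cons h' q), he => by
      have hq : Even q.length := by
        simp only [SimpleGraph.Walk.length_cons] at he
        rcases he with ⟨k, hk⟩
        exact ⟨k - 1, by omega⟩
      exact Relation.ReflTransGen.head ⟨_, h.symm, h'⟩ (R_of_evenWalk q hq)
  | _, _, .cons _ .nil, he => by simp [Nat.even_iff] at he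

theorem evenWalk_of_R {G : SimpleGraph V} {u v : V}
    (h : Relation.ReflTransGen (shareSimplex G) u v) :
    ∃ p : G.Walk u v, Even p.length := by
  induction h with
  | refl => exact ⟨.nil, by simp⟩
  | tail _ hs ih =>
      obtain ⟨p, hp⟩ := ih
      obtain ⟨w, hwb, hwc⟩ := hs
      refine ⟨p.append (.cons hwb.symm (.cons hwc .nil)), ?_⟩
      rcases hp with ⟨k, hk⟩
      refine ⟨k + 1, ?_⟩
      simp [SimpleGraph.Walk.length_append]
      omega

/-- A loopless connected finite simple graph is bipartite iff its
neighbourhood complex is disconnected. -/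
theorem bipartite_iff_nbhdComplex_disconnected [Fintype V] (G : SimpleGraph V)
    (hG : G.Connected) :
    G.Colorable 2 ↔ ¬ NbhdConnected G := by
  classical
  have fin2 : ∀ (x y z : Fin 2), x ≠ y → x ≠ z → y = z := by decide
  constructor
  · rintro ⟨c⟩ ⟨⟨u, x, hux⟩, hall⟩
    have hR := hall u x ⟨x, hux⟩ ⟨u, hux.symm⟩
    have hcol : ∀ a b, Relation.ReflTransGen (shareSimplex G) a b → c a = c b := by
      intro a b h
      induction h with
      | refl => rfl
      | tail _ hs ih =>
          obtain ⟨w, hwb, hwc⟩ := hs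
          exact ih.trans (fin2 (c w) _ _ (c.valid hwb) (c.valid hwc))
    exact (c.valid hux) (hcol _ _ hR)
  · intro h2
    by_cases hE : ∃ a b, G.Adj a b
    · obtain ⟨a, b, hab0⟩ := hE
      rw [NbhdConnected, not_and_or] at h2
      rcases h2 with h2 | h2
      · exact absurd ⟨a, b, hab0⟩ h2
      push_neg at h2
      obtain ⟨u, v, hu, hv, huv⟩ := h2
      -- no even walk from u to a vertex means the connected walk is odd
      have hodd : ∀ {x : V}, ¬ Relation.ReflTransGen (shareSimplex G) u x →
          ∃ p : G.Walk u x, Odd p.length := by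
        intro x hx
        obtain ⟨p⟩ := hG.preconnected u x
        refine ⟨p, ?_⟩
        rw [← Nat.not_even_iff_odd]
        intro he
        exact hx (R_of_evenWalk p he)
      refine ⟨SimpleGraph.Coloring.mk
        (fun x => if Relation.ReflTransGen (shareSimplex G) u x then 0 else 1) ?_⟩
      intro a b hab hc
      by_cases ha : Relation.ReflTransGen (shareSimplex G) u a <;>
        by_cases hb : Relation.ReflTransGen (shareSimplex G) u b <;>
        simp [ha, hb] at hc
      · -- both reachable by even walks: odd closed walk, contradict huv
        obtain ⟨p, hp⟩ := evenWalk_of_R ha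
        obtain ⟨q, hq⟩ := evenWalk_of_R hb
        obtain ⟨r, hr⟩ := hodd huv
        apply huv
        apply R_of_evenWalk ((p.append (SimpleGraph.Walk.cons hab q.reverse)).append r)
        rcases hp with ⟨i, hi⟩; rcases hq with ⟨j, hj⟩; rcases hr with ⟨k, hk⟩
        refine ⟨i + j + k + 1, ?_⟩
        simp [SimpleGraph.Walk.length_append]
        omega
      · -- neither reachable: odd walk to a, plus edge, gives even walk to b
        obtain ⟨p, hp⟩ := hodd ha
        apply hb
        apply R_of_evenWalk (p.append (SimpleGraph.Walk.cons hab .nil))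
        rcases hp with ⟨k, hk⟩
        refine ⟨k + 1, ?_⟩
        simp [SimpleGraph.Walk.length_append]
        omega
    · push_neg at hE
      exact ⟨SimpleGraph.Coloring.mk (fun _ => 0) fun hab => absurd hab (hE _ _)⟩
end

section
/- For any finite simple graphs G and H and any n ≥ 1, the polyhedral Hom complex Hom(G, H × I_n) is homotopy equivalent to Hom(G, H) × [0,1], where I_n is the looped path on {0,…,n} and × on graphs is the categorical product. -/
structure Graph' (V : Type) where
  Adj : V → V → Prop
  symm : ∀ {x y}, Adj x y → Adj y x

/-- A simple graph, viewed as a `Graph`. -/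
def ofSimple {V : Type} (G : SimpleGraph V) : Graph' V := ⟨G.Adj, fun h => G.adj_symm h⟩

/-- The categorical product `A × I_n`, where `I_n` is the looped path on `{0, …, n}`. -/
def Graph'.prodIn {V : Type} (A : Graph' V) (n : ℕ) : Graph' (V × Fin (n + 1)) :=
  ⟨fun p q => A.Adj p.1 q.1 ∧ |(p.2 : ℤ) - (q.2 : ℤ)| ≤ 1, by
    rintro ⟨a, i⟩ ⟨b, j⟩ ⟨h1, h2⟩
    exact ⟨A.symm h1, by rwa [abs_sub_comm]⟩⟩

/-- `η` is a multihomomorphism `T → G` (a cell of the Hom complex `Hom(T, G)`). -/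
def IsMultiHom {VT VG : Type} (T : Graph' VT) (G : Graph' VG) (η : VT → Set VG) : Prop :=
  (∀ t, (η t).Nonempty) ∧
    ∀ ⦃s t⦄, T.Adj s t → ∀ x ∈ η s, ∀ y ∈ η t, G.Adj x y

/-- A geometric model of the polyhedral Hom complex `Hom(T, G)`: points are families of
probability weights on `V(G)`, indexed by `V(T)`, whose supports form a cell. -/
def homSpace {VT VG : Type} [Fintype VT] [Fintype VG] (T : Graph' VT) (G : Graph' VG) :
    Type :=
  {x : VT → VG → ℝ // (∀ t a, 0 ≤ x t a) ∧ (∀ t, ∑ a, x t a = 1) ∧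
    IsMultiHom T G (fun t => {a | x t a ≠ 0})}

noncomputable instance {VT VG : Type} [Fintype VT] [Fintype VG] (T : Graph' VT)
    (G : Graph' VG) : TopologicalSpace (homSpace T G) := by
  unfold homSpace; infer_instance

set_option linter.unusedSectionVars false

namespace HomAux

variable {VT VH : Type} [Fintype VT] [Fintype VH]

/-- The property defining `homSpace`. -/
def Ok {VT VG : Type} [Fintype VT] [Fintype VG] (T : Graph' VT) (G : Graph' VG)
    (x : VT → VG → ℝ) : Prop :=
  (∀ t a, 0 ≤ x t a) ∧ (∀ t, ∑ a, x t a = 1) ∧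
    IsMultiHom T G (fun t => {a | x t a ≠ 0})

/-- Clamp function: `cl j u = clamp₀₁(j - u)`. -/
noncomputable def cl (j : ℕ) (u : ℝ) : ℝ := min 1 (max 0 ((j : ℝ) - u))

lemma cl_nonneg (j : ℕ) (u : ℝ) : 0 ≤ cl j u :=
  le_min zero_le_one (le_max_left _ _)

lemma cl_le_one (j : ℕ) (u : ℝ) : cl j u ≤ 1 := min_le_left _ _

lemma cl_mono (j : ℕ) (u : ℝ) : cl j u ≤ cl (j + 1) u := by
  refine min_le_min le_rfl (max_le_max le_rfl ?_)
  push_cast; linarith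

lemma cl_eq_one {j : ℕ} {u : ℝ} (h : 1 ≤ (j : ℝ) - u) : cl j u = 1 := by
  have h0 : (1:ℝ) ≤ max 0 ((j:ℝ) - u) := le_trans h (le_max_right _ _)
  simpa [cl] using min_eq_left h0

lemma cl_eq_zero {j : ℕ} {u : ℝ} (h : (j : ℝ) - u ≤ 0) : cl j u = 0 := by
  have : max 0 ((j:ℝ) - u) = 0 := max_eq_left h
  simp [cl, this]

lemma cl_pos {j : ℕ} {u : ℝ} (h : 0 < cl j u) : u < (j : ℝ) := by
  rcases lt_min_iff.mp h with ⟨-, h2⟩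
  rcases lt_max_iff.mp h2 with h3 | h3
  · exact absurd h3 (lt_irrefl 0)
  · linarith

lemma cl_lt_one {j : ℕ} {u : ℝ} (h : cl j u < 1) : (j : ℝ) - u < 1 := by
  rcases min_lt_iff.mp h with h1 | h1
  · exact absurd h1 (lt_irrefl 1)
  · exact lt_of_le_of_lt (le_max_right _ _) h1

/-- Partial mass below level `j`. -/
noncomputable def S {n : ℕ} (x : VT → VH × Fin (n + 1) → ℝ) (t : VT) (a : VH) (j : ℕ) : ℝ :=
  ∑ i : Fin (n + 1), if (i : ℕ) < j then x t (a, i) else 0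

lemma S_nonneg {n : ℕ} {x : VT → VH × Fin (n + 1) → ℝ} (hx : ∀ t a, 0 ≤ x t a)
    (t : VT) (a : VH) (j : ℕ) : 0 ≤ S x t a j :=
  Finset.sum_nonneg fun i _ => by split_ifs; exacts [hx t (a, i), le_rfl]

lemma S_mono {n : ℕ} {x : VT → VH × Fin (n + 1) → ℝ} (hx : ∀ t a, 0 ≤ x t a)
    (t : VT) (a : VH) (j : ℕ) : S x t a j ≤ S x t a (j + 1) := by
  refine Finset.sum_le_sum fun i _ => ?_
  split_ifs with h1 h2 h2
  · exact le_rfl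
  · omega
  · exact hx t (a, i)
  · exact le_rfl

lemma S_zero {n : ℕ} (x : VT → VH × Fin (n + 1) → ℝ) (t : VT) (a : VH) :
    S x t a 0 = 0 := by simp [S]

lemma S_total {n : ℕ} (x : VT → VH × Fin (n + 1) → ℝ) (t : VT) (a : VH) :
    S x t a (n + 1) = ∑ i : Fin (n + 1), x t (a, i) := by
  refine Finset.sum_congr rfl fun i _ => ?_
  simp [i.is_lt]

lemma S_ne_zero {n : ℕ} {x : VT → VH × Fin (n + 1) → ℝ} {t : VT} {a : VH} {j : ℕ}
    (h : S x t a j ≠ 0) : ∃ i : Fin (n + 1), (i : ℕ) < j ∧ x t (a, i) ≠ 0 := by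
  by_contra hc
  push_neg at hc
  refine h (Finset.sum_eq_zero fun i _ => ?_)
  split_ifs with h1
  · exact hc i h1
  · rfl

lemma S_succ_sub {n : ℕ} (x : VT → VH × Fin (n + 1) → ℝ) (t : VT) (a : VH)
    (j : Fin (n + 1)) : S x t a ((j : ℕ) + 1) - S x t a (j : ℕ) = x t (a, j) := by
  unfold S
  rw [← Finset.sum_sub_distrib]
  have hκ : ∀ i : Fin (n + 1),
      ((if (i : ℕ) < (j : ℕ) + 1 then x t (a, i) else 0) -
        (if (i : ℕ) < (j : ℕ) then x t (a, i) else 0)) =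
      if i = j then x t (a, i) else 0 := by
    intro i
    rcases eq_or_ne i j with h | h
    · subst h; simp
    · have hne : (i : ℕ) ≠ (j : ℕ) := fun hh => h (Fin.ext hh)
      by_cases h1 : (i : ℕ) < (j : ℕ)
      · simp [h1, Nat.lt_succ_of_lt h1, h]
      · have h2 : ¬ (i : ℕ) < (j : ℕ) + 1 := by omega
        simp [h1, h2, h]
  rw [Finset.sum_congr rfl fun i _ => hκ i]
  simp

/-- The deformation at time `u`. -/
noncomputable def Fm {n : ℕ} (u : ℝ) (x : VT → VH × Fin (n + 1) → ℝ) :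
    VT → VH × Fin (n + 1) → ℝ :=
  fun t p => S x t p.1 ((p.2 : ℕ) + 1) * cl ((p.2 : ℕ) + 1) u -
    S x t p.1 (p.2 : ℕ) * cl (p.2 : ℕ) u

lemma Fm_nonneg {n : ℕ} {x : VT → VH × Fin (n + 1) → ℝ} (hx : ∀ t a, 0 ≤ x t a)
    (u : ℝ) (t : VT) (p : VH × Fin (n + 1)) : 0 ≤ Fm u x t p := by
  have := mul_le_mul (S_mono hx t p.1 (p.2 : ℕ)) (cl_mono (p.2 : ℕ) u)
    (cl_nonneg _ _) (S_nonneg hx t p.1 _)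
  simpa [Fm] using this

lemma Fm_pos_props {n : ℕ} {x : VT → VH × Fin (n + 1) → ℝ} (hx : ∀ t a, 0 ≤ x t a)
    {u : ℝ} {t : VT} {a : VH} {j : Fin (n + 1)} (h : Fm u x t (a, j) ≠ 0) :
    u - 1 < ((j : ℕ) : ℝ) ∧ (∃ i : Fin (n + 1), (i : ℕ) ≤ (j : ℕ) ∧ x t (a, i) ≠ 0) ∧
      (x t (a, j) ≠ 0 ∨ ((j : ℕ) : ℝ) < u + 1) := by
  have hpos : 0 < Fm u x t (a, j) := lt_of_le_of_ne (Fm_nonneg hx u t (a, j)) (Ne.symm h)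
  have hlow : 0 ≤ S x t a (j : ℕ) * cl (j : ℕ) u :=
    mul_nonneg (S_nonneg hx t a _) (cl_nonneg _ _)
  have hA : 0 < S x t a ((j : ℕ) + 1) * cl ((j : ℕ) + 1) u := by
    have : Fm u x t (a, j) = S x t a ((j : ℕ) + 1) * cl ((j : ℕ) + 1) u -
        S x t a (j : ℕ) * cl (j : ℕ) u := rfl
    linarith [this ▸ hpos]
  have hboth : 0 < S x t a ((j : ℕ) + 1) ∧ 0 < cl ((j : ℕ) + 1) u := by
    rcases mul_pos_iff.mp hA with h1 | h1
    · exact h1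
    · exact absurd h1.2 (not_lt.mpr (cl_nonneg _ _))
  constructor
  · have := cl_pos hboth.2
    push_cast at this ⊢
    linarith
  constructor
  · obtain ⟨i, hi, hxi⟩ := S_ne_zero (ne_of_gt hboth.1)
    exact ⟨i, by omega, hxi⟩
  · by_cases hcl : cl (j : ℕ) u = 1
    · left
      have hcl1 : cl ((j : ℕ) + 1) u = 1 :=
        le_antisymm (cl_le_one _ _) (hcl ▸ cl_mono (j : ℕ) u)
      have : Fm u x t (a, j) = x t (a, j) := by
        unfold Fm
        rw [hcl, hcl1, mul_one, mul_one]
        exact S_succ_sub x t a j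
      rw [← this]; exact ne_of_gt hpos
    · right
      have : cl (j : ℕ) u < 1 := lt_of_le_of_ne (cl_le_one _ _) hcl
      have := cl_lt_one this
      linarith

lemma Fm_ok {n : ℕ} (T : Graph' VT) (K : Graph' VH) {x : VT → VH × Fin (n + 1) → ℝ}
    (hx : Ok T (K.prodIn n) x) {u : ℝ} (hun : u ≤ n) : Ok T (K.prodIn n) (Fm u x) := by
  obtain ⟨hx0, hx1, hxne, hxadj⟩ := hx
  have hsum : ∀ t, ∑ p, Fm u x t p = 1 := by
    intro t
    rw [Fintype.sum_prod_type]
    have hline : ∀ a : VH, ∑ j : Fin (n + 1), Fm u x t (a, j) = ∑ i : Fin (n + 1), x t (a, i) := by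
      intro a
      have h1 : ∑ j : Fin (n + 1), Fm u x t (a, j) =
          ∑ j ∈ Finset.range (n + 1),
            (S x t a (j + 1) * cl (j + 1) u - S x t a j * cl j u) :=
        Fin.sum_univ_eq_sum_range (fun j => S x t a (j + 1) * cl (j + 1) u - S x t a j * cl j u) (n + 1)
      rw [h1, Finset.sum_range_sub (fun j => S x t a j * cl j u)]
      have hcl : cl (n + 1) u = 1 := by
        apply cl_eq_one; push_cast; linarith
      rw [S_zero, hcl, mul_one, zero_mul, sub_zero, S_total]
    rw [Finset.sum_congr rfl fun a _ => hline a, ← Fintype.sum_prod_type]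
    exact hx1 t
  refine ⟨Fm_nonneg hx0 u, hsum, ?_, ?_⟩
  · intro t
    by_contra hc
    have hc' : ∀ p, Fm u x t p = 0 := fun p => not_ne_iff.mp fun hne => hc ⟨p, hne⟩
    have : (1:ℝ) = 0 := by rw [← hsum t]; exact Finset.sum_eq_zero fun p _ => hc' p
    norm_num at this
  · rintro s t hst ⟨a, j⟩ ha ⟨b, j'⟩ hb
    obtain ⟨hj1, ⟨i, hi, hxi⟩, hj3⟩ := Fm_pos_props hx0 ha
    obtain ⟨hj1', ⟨i', hi', hxi'⟩, hj3'⟩ := Fm_pos_props hx0 hb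
    have hKadj : K.Adj a b := (hxadj hst (a,i) hxi (b,i') hxi').1
    have hle1 : (j : ℕ) ≤ (j' : ℕ) + 1 := by
      rcases hj3 with hxj | hlt
      · have habs : |((j:ℕ):ℤ) - ((i':ℕ):ℤ)| ≤ 1 := (hxadj hst (a,j) hxj (b,i') hxi').2
        rw [abs_le] at habs
        omega
      · have : ((j : ℕ) : ℝ) < ((j' : ℕ) : ℝ) + 2 := by linarith
        have : (j : ℕ) < (j' : ℕ) + 2 := by exact_mod_cast this
        omega
    have hle2 : (j' : ℕ) ≤ (j : ℕ) + 1 := by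
      rcases hj3' with hxj' | hlt'
      · have habs : |((i:ℕ):ℤ) - ((j':ℕ):ℤ)| ≤ 1 := (hxadj hst (a,i) hxi (b,j') hxj').2
        rw [abs_le] at habs
        omega
      · have : ((j' : ℕ) : ℝ) < ((j : ℕ) : ℝ) + 2 := by linarith
        have : (j' : ℕ) < (j : ℕ) + 2 := by exact_mod_cast this
        omega
    refine ⟨hKadj, ?_⟩
    show |((j:ℕ):ℤ) - ((j':ℕ):ℤ)| ≤ 1
    rw [abs_le]
    omega

lemma Fm_zero {n : ℕ} (x : VT → VH × Fin (n + 1) → ℝ) : Fm 0 x = x := by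
  funext t p
  obtain ⟨a, j⟩ := p
  have h1 : cl ((j : ℕ) + 1) 0 = 1 := by apply cl_eq_one; push_cast; linarith
  have h2 : S x t a (j : ℕ) * cl (j : ℕ) 0 = S x t a (j : ℕ) := by
    rcases Nat.eq_zero_or_pos (j : ℕ) with h | h
    · rw [h, S_zero, zero_mul]
    · have : cl (j : ℕ) 0 = 1 := by
        apply cl_eq_one
        have : (1:ℝ) ≤ (j : ℕ) := by exact_mod_cast h
        linarith
      rw [this, mul_one]
  show S x t a ((j : ℕ) + 1) * cl ((j : ℕ) + 1) 0 - S x t a (j : ℕ) * cl (j : ℕ) 0 = x t (a, j)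
  rw [h1, mul_one, h2]
  exact S_succ_sub x t a j

/-- Projection to `Hom(T, K)`. -/
noncomputable def proj {n : ℕ} (x : VT → VH × Fin (n + 1) → ℝ) : VT → VH → ℝ :=
  fun t a => ∑ j : Fin (n + 1), x t (a, j)

/-- Inclusion at the top level. -/
noncomputable def incl (n : ℕ) (y : VT → VH → ℝ) : VT → VH × Fin (n + 1) → ℝ :=
  fun t p => if p.2 = Fin.last n then y t p.1 else 0

lemma Fm_top {n : ℕ} (x : VT → VH × Fin (n + 1) → ℝ) : Fm (n : ℝ) x = incl n (proj x) := by
  funext t p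
  obtain ⟨a, j⟩ := p
  show S x t a ((j : ℕ) + 1) * cl ((j : ℕ) + 1) (n : ℝ) -
      S x t a (j : ℕ) * cl (j : ℕ) (n : ℝ) = if (j : Fin (n+1)) = Fin.last n then proj x t a else 0
  rcases eq_or_ne j (Fin.last n) with h | h
  · have hj : (j : ℕ) = n := by rw [h]; rfl
    have h1 : cl ((j : ℕ) + 1) (n : ℝ) = 1 := by apply cl_eq_one; rw [hj]; push_cast; linarith
    have h2 : cl (j : ℕ) (n : ℝ) = 0 := by apply cl_eq_zero; rw [hj]; linarith
    rw [if_pos h, h1, h2, mul_one, mul_zero, sub_zero, hj, S_total]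
    rfl
  · have hj : (j : ℕ) < n := by
      have := j.is_lt
      have hne : (j : ℕ) ≠ n := fun hh => h (Fin.ext hh)
      omega
    have h1 : cl ((j : ℕ) + 1) (n : ℝ) = 0 := by
      apply cl_eq_zero
      have : ((j : ℕ) : ℝ) + 1 ≤ (n : ℝ) := by exact_mod_cast hj
      push_cast; linarith
    have h2 : cl (j : ℕ) (n : ℝ) = 0 := by
      apply cl_eq_zero
      have : ((j : ℕ) : ℝ) ≤ (n : ℝ) := by exact_mod_cast hj.le
      linarith
    rw [if_neg h, h1, h2, mul_zero, mul_zero, sub_zero]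

lemma proj_ok {n : ℕ} (T : Graph' VT) (K : Graph' VH) {x : VT → VH × Fin (n + 1) → ℝ}
    (hx : Ok T (K.prodIn n) x) : Ok T K (proj x) := by
  obtain ⟨hx0, hx1, hxne, hxadj⟩ := hx
  refine ⟨fun t a => Finset.sum_nonneg fun j _ => hx0 t (a, j), ?_, ?_, ?_⟩
  · intro t
    rw [← hx1 t, Fintype.sum_prod_type]
    rfl
  · intro t
    obtain ⟨⟨a, j⟩, hp⟩ := hxne t
    refine ⟨a, fun h0 => ?_⟩
    unfold proj at h0
    rw [Finset.sum_eq_zero_iff_of_nonneg (fun i _ => hx0 t (a, i))] at h0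
    exact hp (h0 j (Finset.mem_univ j))
  · intro s t hst a ha b hb
    obtain ⟨j, -, hj⟩ := Finset.exists_ne_zero_of_sum_ne_zero ha
    obtain ⟨j', -, hj'⟩ := Finset.exists_ne_zero_of_sum_ne_zero hb
    exact (hxadj hst (a,j) hj (b,j') hj').1

lemma incl_ok {n : ℕ} (T : Graph' VT) (K : Graph' VH) {y : VT → VH → ℝ}
    (hy : Ok T K y) : Ok T (K.prodIn n) (incl n y) := by
  obtain ⟨hy0, hy1, hyne, hyadj⟩ := hy
  refine ⟨?_, ?_, ?_, ?_⟩
  · intro t p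
    unfold incl
    split_ifs
    · exact hy0 t p.1
    · exact le_rfl
  · intro t
    rw [Fintype.sum_prod_type]
    have : ∀ a : VH, ∑ j : Fin (n + 1), incl n y t (a, j) = y t a := by
      intro a
      simp [incl, Finset.sum_ite_eq']
    rw [Finset.sum_congr rfl fun a _ => this a]
    exact hy1 t
  · intro t
    obtain ⟨a, ha⟩ := hyne t
    exact ⟨(a, Fin.last n), by simpa [incl] using ha⟩
  · rintro s t hst ⟨a, j⟩ ha ⟨b, j'⟩ hb
    simp only [Set.mem_setOf_eq, incl] at ha hb
    have hja : j = Fin.last n := by by_contra h; simp [h] at ha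
    have hjb : j' = Fin.last n := by by_contra h; simp [h] at hb
    rw [hja] at ha; rw [hjb] at hb
    simp only [if_pos rfl] at ha hb
    refine ⟨hyadj hst a ha b hb, ?_⟩
    rw [hja, hjb]
    simp

lemma proj_incl {n : ℕ} (y : VT → VH → ℝ) : proj (incl n y) = y := by
  funext t a
  simp [proj, incl, Finset.sum_ite_eq']

lemma continuous_cl (j : ℕ) : Continuous fun u : ℝ => cl j u := by
  unfold cl
  fun_prop

end HomAux

open HomAux in
/-- For finite simple graphs `G, H` and `n ≥ 1`, the Hom complex
`Hom(G, H × I_n)` is homotopy equivalent to `Hom(G, H) × [0, 1]`. -/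
theorem homSpace_prodIn_homotopyEquiv {VG VH : Type} [Fintype VG] [Fintype VH]
    (G : SimpleGraph VG) (H : SimpleGraph VH) (n : ℕ) (hn : 1 ≤ n) :
    Nonempty (ContinuousMap.HomotopyEquiv
      (homSpace (ofSimple G) ((ofSimple H).prodIn n))
      (homSpace (ofSimple G) (ofSimple H) × unitInterval)) := by
  classical
  set T := ofSimple G
  set K := ofSimple H
  let P := homSpace T (K.prodIn n)
  let Q := homSpace T K
  -- the continuous projection
  have hcP : ∀ (t : VG) (p : VH × Fin (n + 1)), Continuous fun x : P => x.1 t p := by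
    intro t p
    exact (continuous_apply p).comp ((continuous_apply t).comp continuous_subtype_val)
  have hcQ : ∀ (t : VG) (a : VH), Continuous fun y : Q => y.1 t a := by
    intro t a
    exact (continuous_apply a).comp ((continuous_apply t).comp continuous_subtype_val)
  let pC : C(P, Q) := ⟨fun x => ⟨proj x.1, proj_ok T K x.2⟩, by
    refine Continuous.subtype_mk ?_ _
    refine continuous_pi fun t => continuous_pi fun a => ?_
    exact continuous_finset_sum _ fun j _ => hcP t (a, j)⟩
  let iC : C(Q, P) := ⟨fun y => ⟨incl n y.1, incl_ok T K y.2⟩, by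
    refine Continuous.subtype_mk ?_ _
    refine continuous_pi fun t => continuous_pi fun p => ?_
    unfold incl
    split_ifs
    · exact hcQ t p.1
    · exact continuous_const⟩
  -- the homotopy from iC ∘ pC to the identity
  have hmem : ∀ (s : unitInterval) (x : P),
      Ok T (K.prodIn n) (Fm ((n : ℝ) * (1 - (s : ℝ))) x.1) := by
    intro s x
    refine Fm_ok T K x.2 ?_
    nlinarith [s.2.1, s.2.2, Nat.cast_nonneg (α := ℝ) n]
  have hu : Continuous fun q : unitInterval × P => (n : ℝ) * (1 - (q.1 : ℝ)) :=
    continuous_const.mul (continuous_const.sub (continuous_subtype_val.comp continuous_fst))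
  have hS : ∀ (t : VG) (a : VH) (j : ℕ),
      Continuous fun q : unitInterval × P => S q.2.1 t a j := by
    intro t a j
    refine continuous_finset_sum _ fun i _ => ?_
    by_cases h : (i : ℕ) < j
    · simpa [h, Function.comp_def] using (hcP t (a, i)).comp continuous_snd
    · simpa [h] using (continuous_const : Continuous fun _ : unitInterval × P => (0:ℝ))
  have contF : Continuous fun q : unitInterval × P =>
      Fm ((n : ℝ) * (1 - (q.1 : ℝ))) q.2.1 := by
    refine continuous_pi fun t => continuous_pi fun p => ?_
    exact ((hS t p.1 ((p.2 : ℕ) + 1)).mul ((continuous_cl _).comp hu)).sub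
      ((hS t p.1 (p.2 : ℕ)).mul ((continuous_cl _).comp hu))
  let F : ContinuousMap.Homotopy (iC.comp pC) (ContinuousMap.id P) :=
    { toFun := fun q => ⟨Fm ((n : ℝ) * (1 - (q.1 : ℝ))) q.2.1, hmem q.1 q.2⟩
      continuous_toFun := contF.subtype_mk _
      map_zero_left := fun x => by
        refine Subtype.ext ?_
        have h0 : ((0 : unitInterval) : ℝ) = 0 := rfl
        show Fm ((n : ℝ) * (1 - ((0 : unitInterval) : ℝ))) x.1 = incl n (proj x.1)
        rw [h0]
        norm_num
        exact Fm_top x.1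
      map_one_left := fun x => by
        refine Subtype.ext ?_
        have h1 : ((1 : unitInterval) : ℝ) = 1 := rfl
        show Fm ((n : ℝ) * (1 - ((1 : unitInterval) : ℝ))) x.1 = x.1
        rw [h1]
        norm_num
        exact Fm_zero x.1 }
  have hpi : pC.comp iC = ContinuousMap.id Q :=
    ContinuousMap.ext fun y => Subtype.ext (proj_incl y.1)
  let e1 : ContinuousMap.HomotopyEquiv P Q :=
    { toFun := pC
      invFun := iC
      left_inv := ⟨F⟩
      right_inv := hpi ▸ ContinuousMap.Homotopic.refl _ }
  haveI : ContractibleSpace unitInterval :=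
    (convex_Icc (0:ℝ) 1).contractibleSpace (Set.nonempty_Icc.mpr zero_le_one)
  obtain ⟨eu⟩ := ContractibleSpace.hequiv_unit unitInterval
  exact ⟨e1.trans (((ContinuousMap.HomotopyEquiv.prodCongr
    (ContinuousMap.HomotopyEquiv.refl Q) eu).trans
    (Homeomorph.prodPUnit Q).toHomotopyEquiv).symm)⟩
end

section
/- Let A, B, C be finite graphs with graph homomorphisms f : A → B, g : A → C, and let D_n be the double mapping cylinder of height n with canonical inclusions j₁ : B → D_n, j₂ : C → D_n. Suppose G is a graph with graph homomorphisms k₁ : B → G and k₂ : C → G and K : A × I_n → G is a graph homomorphism with K(a, n) = k₁(f(a)) and K(a, 0) = k₂(g(a)) for all vertices a of A (a ×-homotopy from k₂∘g to k₁∘f of length n). Then the map α : D_n → G defined by α = k₁ on B, α = k₂ on C, and α = K on A × I_n is a well-defined graph homomorphism satisfying α∘j₁ = k₁ and α∘j₂ = k₂. -/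
/-- Given `f : A → B`, `g : A → C`, graph homomorphisms
`k₁ : B → G`, `k₂ : C → G` and a ×-homotopy `K : A × I_n → G` with `K(a, n) = k₁(f a)`
and `K(a, 0) = k₂(g a)`, the map `α : D_n → G` given by `k₁` on `B`, `k₂` on `C` and
`K` on `A × I_n` is a well-defined graph homomorphism with `α ∘ j₁ = k₁`, `α ∘ j₂ = k₂`. -/
theorem cylinder_universal_map {VA VB VC VG : Type}
    [Fintype VA] [Fintype VB] [Fintype VC] [Fintype VG]
    (A : LGraph VA) (B : LGraph VB) (C : LGraph VC) (G : LGraph VG)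
    (f : GHom A B) (g : GHom A C) (n : ℕ)
    (k₁ : GHom B G) (k₂ : GHom C G) (K : GHom (A.prodIn n) G)
    (hKtop : ∀ a, K.toFun (a, Fin.last n) = k₁.toFun (f.toFun a))
    (hKbot : ∀ a, K.toFun (a, 0) = k₂.toFun (g.toFun a)) :
    ∃ α : GHom (cylGraph A B C f.toFun g.toFun n) G,
      (∀ b, α.toFun (Quot.mk _ (Sum.inl b)) = k₁.toFun b) ∧
      (∀ c, α.toFun (Quot.mk _ (Sum.inr (Sum.inr c))) = k₂.toFun c) ∧
      (∀ p : VA × Fin (n + 1), α.toFun (Quot.mk _ (Sum.inr (Sum.inl p))) = K.toFun p) := by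
  set base : (VB ⊕ (VA × Fin (n + 1)) ⊕ VC) → VG :=
    Sum.elim k₁.toFun (Sum.elim K.toFun k₂.toFun) with hbase
  have hresp : ∀ x y, cylRel f.toFun g.toFun n x y → base x = base y := by
    rintro x y (⟨a, rfl, rfl⟩ | ⟨a, rfl, rfl⟩)
    · exact (hKtop a).symm
    · exact (hKbot a).symm
  refine ⟨⟨Quot.lift base hresp, ?_⟩, fun b => rfl, fun c => rfl, fun p => rfl⟩
  rintro x y ⟨x₀, y₀, rfl, rfl, h⟩
  rcases x₀ with b | p | c <;> rcases y₀ with b' | p' | c' <;>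
    simp only [cylBaseAdj] at h <;> first
  | exact k₁.map_adj h
  | exact K.map_adj h
  | exact k₂.map_adj h
end
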